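/- Let j, k ≥ 1 with n−j−k ≥ 1 and let f₀(t) = (1+t²)^{−n/2}. Then (I_{j,k} f₀)(s) = c_k (1+s²)^{(j+k−n)/2} for all s > 0, where c_k = π^{k/2} Γ((n−k)/2)/Γ(n/2). -/

import Mathlib

open MeasureTheory Set ENNReal


lemma lintegral_image_deriv {s : Set ℝ} {f f' : ℝ → ℝ} (hs : MeasurableSet s)
    (hf' : ∀ x ∈ s, HasDerivWithinAt f (f' x) s x) (hf : InjOn f s) (g : ℝ → ℝ≥0∞) :
    ∫⁻ x in f '' s, g x = ∫⁻ x in s, ENNReal.ofReal |f' x| * g (f x) := by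
  simpa only [ContinuousLinearMap.det_toSpanSingleton] using
    lintegral_image_eq_lintegral_abs_det_fderiv_mul volume hs
      (fun x hx => (hf' x hx).hasFDerivWithinAt) hf g

lemma beta_lintegral {a b : ℝ} (ha : 0 < a) (hb : 0 < b) :
    ∫⁻ x in Ioo (0:ℝ) 1, ENNReal.ofReal (x ^ (a - 1) * (1 - x) ^ (b - 1)) =
      ENNReal.ofReal (Real.Gamma a * Real.Gamma b / Real.Gamma (a + b)) := by
  have ha' : 0 < (a:ℂ).re := by simpa using ha
  have hb' : 0 < (b:ℂ).re := by simpa using hb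
  have hcong : ∀ x ∈ Ioc (0:ℝ) 1,
      ((x:ℂ) ^ ((a:ℂ) - 1) * (1 - (x:ℂ)) ^ ((b:ℂ) - 1)).re
        = x ^ (a - 1) * (1 - x) ^ (b - 1) := by
    intro x hx
    have h1 : ((x:ℂ) ^ ((a:ℂ) - 1)) = ((x ^ (a-1) : ℝ) : ℂ) := by
      rw [Complex.ofReal_cpow hx.1.le]; push_cast; ring_nf
    have h2 : ((1 - (x:ℂ)) ^ ((b:ℂ) - 1)) = (((1 - x) ^ (b-1) : ℝ) : ℂ) := by
      rw [show (1 - (x:ℂ)) = (((1:ℝ) - x : ℝ) : ℂ) by push_cast; ring,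
        Complex.ofReal_cpow (by linarith [hx.2])]; push_cast; ring_nf
    rw [h1, h2, ← Complex.ofReal_mul, Complex.ofReal_re]
  -- value of the real integral
  have hbeta : Complex.betaIntegral a b =
      ((∫ x in (0:ℝ)..1, x ^ (a - 1) * (1 - x) ^ (b - 1) : ℝ) : ℂ) := by
    rw [Complex.betaIntegral, ← intervalIntegral.integral_ofReal]
    refine intervalIntegral.integral_congr (fun x hx => ?_)
    rw [uIcc_of_le zero_le_one] at hx
    have h1 : ((x:ℂ) ^ ((a:ℂ) - 1)) = ((x ^ (a-1) : ℝ) : ℂ) := by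
      rw [Complex.ofReal_cpow hx.1]; push_cast; ring_nf
    have h2 : ((1 - (x:ℂ)) ^ ((b:ℂ) - 1)) = (((1 - x) ^ (b-1) : ℝ) : ℂ) := by
      rw [show (1 - (x:ℂ)) = (((1:ℝ) - x : ℝ) : ℂ) by push_cast; ring,
        Complex.ofReal_cpow (by linarith [hx.2])]; push_cast; ring_nf
    rw [h1, h2, ← Complex.ofReal_mul]
  have hval : (∫ x in (0:ℝ)..1, x ^ (a - 1) * (1 - x) ^ (b - 1) : ℝ)
      = Real.Gamma a * Real.Gamma b / Real.Gamma (a + b) := by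
    have h := Complex.Gamma_mul_Gamma_eq_betaIntegral ha' hb'
    rw [hbeta] at h
    have hG : Real.Gamma (a+b) ≠ 0 := (Real.Gamma_pos_of_pos (by linarith)).ne'
    have : ((Real.Gamma a * Real.Gamma b : ℝ) : ℂ)
        = ((Real.Gamma (a+b) * ∫ x in (0:ℝ)..1, x ^ (a - 1) * (1 - x) ^ (b - 1) : ℝ) : ℂ) := by
      push_cast
      rw [← Complex.Gamma_ofReal, ← Complex.Gamma_ofReal, ← Complex.Gamma_ofReal] at *
      convert h using 2 <;> push_cast <;> ring
    have h2 := Complex.ofReal_inj.mp this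
    field_simp
    linarith [h2]
  -- integrability
  have hint : IntegrableOn (fun x : ℝ => x ^ (a - 1) * (1 - x) ^ (b - 1)) (Ioc 0 1) := by
    have h := (Complex.betaIntegral_convergent ha' hb').1
    have := h.re
    refine (IntegrableOn.congr_fun this ?_ measurableSet_Ioc)
    intro x hx
    exact (hcong x hx)
  have hnn : 0 ≤ᶠ[ae (volume.restrict (Ioc (0:ℝ) 1))]
      fun x : ℝ => x ^ (a - 1) * (1 - x) ^ (b - 1) := by
    filter_upwards [ae_restrict_mem measurableSet_Ioc] with x hx
    exact mul_nonneg (Real.rpow_nonneg hx.1.le _) (Real.rpow_nonneg (by linarith [hx.2]) _)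
  rw [setLIntegral_congr Ioo_ae_eq_Ioc, ← ofReal_integral_eq_lintegral_ofReal hint hnn,
    ← hval, intervalIntegral.integral_of_le zero_le_one]
lemma rpow_alg1 (A x p q : ℝ) (hA : 0 < A) (hx : 0 < x) (hx1 : x < 1) :
    (A * (1 - x) / x) ^ p * (A / x) ^ q * (A / x ^ 2)
      = A ^ (p + q + 1) * ((1 - x) ^ p * x ^ (-p - q - 2)) := by
  have h1x : (0:ℝ) < 1 - x := by linarith
  have e1 : (0:ℝ) < A * (1 - x) / x := by positivity
  have e2 : (0:ℝ) < A / x := by positivity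
  have hAx : A / x ^ 2 = Real.exp (Real.log A - Real.log (x ^ 2)) := by
    rw [Real.exp_sub, Real.exp_log hA, Real.exp_log (by positivity)]
  rw [Real.rpow_def_of_pos e1, Real.rpow_def_of_pos e2, Real.rpow_def_of_pos hA,
    Real.rpow_def_of_pos h1x, Real.rpow_def_of_pos hx, hAx,
    ← Real.exp_add, ← Real.exp_add, ← Real.exp_add, ← Real.exp_add]
  congr 1
  rw [Real.log_div (by positivity) hx.ne', Real.log_mul hA.ne' h1x.ne',
    Real.log_div hA.ne' hx.ne', Real.log_pow]
  push_cast; ring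

lemma rpow_alg2 (s x p q u : ℝ) (hs : 0 < s) (hx : 0 < x) (hx1 : x < 1)
    (hu : u = -p - q - 2) :
    (s ^ 2 * (1 + s ^ 2) * (1 - x) / (1 + s ^ 2 - s ^ 2 * x)) ^ p *
      ((s ^ 2 * x / (1 + s ^ 2 - s ^ 2 * x)) ^ q *
        (((1 + s ^ 2) / (1 + s ^ 2 - s ^ 2 * x)) ^ u *
          (s ^ 2 * (1 + s ^ 2) / (1 + s ^ 2 - s ^ 2 * x) ^ 2)))
      = (s ^ 2) ^ (p + q + 1) * ((1 + s ^ 2) ^ (p + u + 1) *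
          (x ^ q * (1 - x) ^ p)) := by
  subst hu
  have h1x : (0:ℝ) < 1 - x := by linarith
  have hD : (0:ℝ) < 1 + s ^ 2 - s ^ 2 * x := by nlinarith [sq_nonneg s]
  have hs2 : (0:ℝ) < s ^ 2 := by positivity
  have h1s : (0:ℝ) < 1 + s ^ 2 := by positivity
  have hlast : s ^ 2 * (1 + s ^ 2) / (1 + s ^ 2 - s ^ 2 * x) ^ 2
      = Real.exp (Real.log (s ^ 2) + Real.log (1 + s ^ 2)
          - Real.log ((1 + s ^ 2 - s ^ 2 * x) ^ 2)) := by
    rw [Real.exp_sub, Real.exp_add, Real.exp_log hs2, Real.exp_log h1s,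
      Real.exp_log (by positivity)]
  rw [Real.rpow_def_of_pos (by positivity), Real.rpow_def_of_pos (by positivity),
    Real.rpow_def_of_pos (by positivity), Real.rpow_def_of_pos hs2,
    Real.rpow_def_of_pos h1s, Real.rpow_def_of_pos hx, Real.rpow_def_of_pos h1x, hlast,
    ← Real.exp_add, ← Real.exp_add, ← Real.exp_add, ← Real.exp_add, ← Real.exp_add,
    ← Real.exp_add]
  congr 1
  rw [Real.log_div (by positivity) hD.ne', Real.log_mul (by positivity) h1x.ne',
    Real.log_mul hs2.ne' h1s.ne', Real.log_div (by positivity) hD.ne',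
    Real.log_mul hs2.ne' hx.ne', Real.log_div h1s.ne' hD.ne', Real.log_pow, Real.log_pow]
  push_cast; ring
lemma inner_eval (k m : ℝ) (hk : 0 < k) (hm : 0 < m) {r : ℝ} (hr : 0 < r) :
    ∫⁻ t in Ioi r, ENNReal.ofReal ((t ^ 2 - r ^ 2) ^ (k / 2 - 1) * t) *
        ENNReal.ofReal ((1 + t ^ 2) ^ (-(k + m) / 2)) =
      ENNReal.ofReal ((Real.Gamma (m / 2) * Real.Gamma (k / 2) / Real.Gamma ((k + m) / 2))
        * (1 + r ^ 2) ^ (-m / 2) / 2) := by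
  set A : ℝ := 1 + r ^ 2 with hAdef
  have hA : 0 < A := by positivity
  set φ : ℝ → ℝ := fun x => Real.sqrt (A / x - 1) with hφdef
  have hkey : ∀ x ∈ Ioo (0:ℝ) 1, r ^ 2 < A / x - 1 := by
    intro x hx
    have h1 : A < A / x := by
      rw [lt_div_iff₀ hx.1]; nlinarith [hx.2]
    simp only [hAdef] at h1 ⊢; linarith
  -- image
  have himg : φ '' Ioo 0 1 = Ioi r := by
    ext t
    constructor
    · rintro ⟨x, hx, rfl⟩
      have h2 := hkey x hx
      have : r < Real.sqrt (A / x - 1) := by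
        rw [show r = Real.sqrt (r ^ 2) from (Real.sqrt_sq hr.le).symm]
        exact Real.sqrt_lt_sqrt (sq_nonneg r) h2
      exact this
    · intro ht
      have ht' : r < t := ht
      have ht0 : 0 < t := hr.trans ht'
      have h1t : (0:ℝ) < 1 + t ^ 2 := by positivity
      refine ⟨A / (1 + t ^ 2), ⟨by positivity, ?_⟩, ?_⟩
      · rw [div_lt_one h1t]
        simp only [hAdef]; nlinarith
      · simp only [hφdef]
        rw [show A / (A / (1 + t ^ 2)) = 1 + t ^ 2 by field_simp,
          show 1 + t ^ 2 - 1 = t ^ 2 by ring, Real.sqrt_sq ht0.le]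
  -- injectivity
  have hinj : InjOn φ (Ioo 0 1) := by
    intro x hx y hy hxy
    have hx2 := (hkey x hx).trans_le' (sq_nonneg r)
    have hy2 := (hkey y hy).trans_le' (sq_nonneg r)
    have h : A / x - 1 = A / y - 1 := by
      have := congrArg (· ^ 2) hxy
      simpa [hφdef, Real.sq_sqrt hx2.le, Real.sq_sqrt hy2.le] using this
    have hAx : A / x = A / y := by linarith
    have h2 := (div_eq_div_iff hx.1.ne' hy.1.ne').mp hAx
    exact (mul_left_cancel₀ hA.ne' h2).symm
  -- derivative
  set φ' : ℝ → ℝ := fun x => 1 / (2 * Real.sqrt (A / x - 1)) * -(A / x ^ 2) with hφ'def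
  have hder : ∀ x ∈ Ioo (0:ℝ) 1, HasDerivWithinAt φ (φ' x) (Ioo 0 1) x := by
    intro x hx
    have hx2 := (hkey x hx).trans_le' (sq_nonneg r)
    have h1 : HasDerivAt (fun y : ℝ => A / y - 1) (-(A / x ^ 2)) x := by
      have h := ((hasDerivAt_inv hx.1.ne').const_mul A).sub_const 1
      have he : A * -(x ^ 2)⁻¹ = -(A / x ^ 2) := by field_simp
      simpa only [div_eq_mul_inv, he] using h
    have h2 : HasDerivAt Real.sqrt (1 / (2 * Real.sqrt (A / x - 1))) (A / x - 1) :=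
      Real.hasDerivAt_sqrt hx2.ne'
    exact (h2.comp x h1).hasDerivWithinAt
  rw [← himg, lintegral_image_deriv measurableSet_Ioo hder hinj]
  rw [setLIntegral_congr_fun_ae measurableSet_Ioo (ae_of_all _ (fun x hx => ?_))
    (g := fun x => ENNReal.ofReal (A ^ (-m / 2) / 2) *
      ENNReal.ofReal (x ^ (m / 2 - 1) * (1 - x) ^ (k / 2 - 1)))]
  · rw [lintegral_const_mul' _ _ ENNReal.ofReal_ne_top, beta_lintegral (by linarith) (by linarith),
      ← ENNReal.ofReal_mul (by positivity),
      show m / 2 + k / 2 = (k + m) / 2 by ring]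
    congr 1
    ring
  · -- pointwise computation
    beta_reduce
    have hx0 := hx.1
    have hx1 := hx.2
    have hx2 := (hkey x hx).trans_le' (sq_nonneg r)
    have hsq : 0 < Real.sqrt (A / x - 1) := Real.sqrt_pos.mpr hx2
    have hφx : φ x = Real.sqrt (A / x - 1) := rfl
    have hφsq : φ x ^ 2 = A / x - 1 := Real.sq_sqrt hx2.le
    have h1 : φ x ^ 2 - r ^ 2 = A * (1 - x) / x := by
      rw [hφsq]; simp only [hAdef]; field_simp; ring
    have h2 : 1 + φ x ^ 2 = A / x := by rw [hφsq]; ring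
    have habs : |φ' x| = 1 / (2 * Real.sqrt (A / x - 1)) * (A / x ^ 2) := by
      simp only [hφ'def, abs_mul, abs_neg, abs_div, abs_one]
      rw [abs_of_pos hA, abs_of_pos (pow_pos hx0 2), abs_of_pos two_pos, abs_of_pos hsq]
    have hc2 : 0 ≤ (A * (1 - x) / x) ^ (k / 2 - 1) * φ x :=
      mul_nonneg (Real.rpow_nonneg
        (div_nonneg (mul_nonneg hA.le (by linarith)) hx0.le) _) (Real.sqrt_nonneg _)
    have hc1 : 0 ≤ 1 / (2 * Real.sqrt (A / x - 1)) * (A / x ^ 2) :=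
      mul_nonneg (by positivity) (div_nonneg hA.le (sq_nonneg x))
    have hcst : (0:ℝ) ≤ A ^ (-m / 2) / 2 :=
      div_nonneg (Real.rpow_nonneg hA.le _) two_pos.le
    rw [habs, h1, h2, ← ENNReal.ofReal_mul hc2, ← ENNReal.ofReal_mul hc1,
      ← ENNReal.ofReal_mul hcst]
    congr 1
    rw [hφx]
    have hcancel : ∀ P Q b S : ℝ, S ≠ 0 →
        1 / (2 * S) * b * (P * S * Q) = P * Q * b / 2 := by
      intro P Q b S hS; field_simp
    rw [hcancel _ _ _ _ hsq.ne']
    have halg := rpow_alg1 A x (k / 2 - 1) (-(k + m) / 2) hA hx0 hx1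
    have e1 : k / 2 - 1 + -(k + m) / 2 + 1 = -m / 2 := by ring
    have e2 : -(k / 2 - 1) - -(k + m) / 2 - 2 = m / 2 - 1 := by ring
    rw [e1, e2] at halg
    rw [halg]
    ring
lemma outer_eval (j l : ℝ) (hj : 0 < j) (hl : 0 < l) {s : ℝ} (hs : 0 < s) :
    ∫⁻ r in Ioo (0:ℝ) s, ENNReal.ofReal ((s ^ 2 - r ^ 2) ^ (j / 2 - 1) * r *
        (r ^ (l - 2) * (1 + r ^ 2) ^ (-(j + l) / 2))) =
      ENNReal.ofReal ((Real.Gamma (l / 2) * Real.Gamma (j / 2) / Real.Gamma ((j + l) / 2)) *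
        ((s ^ 2) ^ ((j + l) / 2 - 1) * (1 + s ^ 2) ^ (-l / 2)) / 2) := by
  have hs2 : (0:ℝ) < s ^ 2 := by positivity
  have h1s : (0:ℝ) < 1 + s ^ 2 := by positivity
  set φ : ℝ → ℝ := fun x => Real.sqrt (s ^ 2 * x / (1 + s ^ 2 - s ^ 2 * x)) with hφdef
  have hD : ∀ x : ℝ, x < 1 → (0:ℝ) < 1 + s ^ 2 - s ^ 2 * x := by
    intro x hx; nlinarith [sq_nonneg s]
  have hG : ∀ x ∈ Ioo (0:ℝ) 1, 0 < s ^ 2 * x / (1 + s ^ 2 - s ^ 2 * x) := by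
    intro x hx; exact div_pos (mul_pos (by positivity) hx.1) (hD x hx.2)
  -- image
  have himg : φ '' Ioo 0 1 = Ioo 0 s := by
    ext r
    constructor
    · rintro ⟨x, hx, rfl⟩
      have hGx := hG x hx
      have hDx := hD x hx.2
      refine ⟨Real.sqrt_pos.mpr hGx, ?_⟩
      have hxD : x < 1 + s ^ 2 - s ^ 2 * x := by
        nlinarith [mul_nonneg (by linarith [hx.2] : (0:ℝ) ≤ 1 - x) hs2.le, hx.1, hx.2]
      have hlt : s ^ 2 * x / (1 + s ^ 2 - s ^ 2 * x) < s ^ 2 := by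
        rw [div_lt_iff₀ hDx]; exact (mul_lt_mul_iff_right₀ hs2).mpr hxD
      calc Real.sqrt (s ^ 2 * x / (1 + s ^ 2 - s ^ 2 * x))
          < Real.sqrt (s ^ 2) := Real.sqrt_lt_sqrt hGx.le hlt
        _ = s := Real.sqrt_sq hs.le
    · rintro ⟨hr0, hrs⟩
      have h1r : (0:ℝ) < 1 + r ^ 2 := by positivity
      refine ⟨r ^ 2 * (1 + s ^ 2) / (s ^ 2 * (1 + r ^ 2)), ⟨by positivity, ?_⟩, ?_⟩
      · rw [div_lt_one (by positivity)]; nlinarith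
      · have hx1 : r ^ 2 * (1 + s ^ 2) / (s ^ 2 * (1 + r ^ 2)) < 1 := by
          rw [div_lt_one (by positivity)]; nlinarith
        have hDx := hD _ hx1
        simp only [hφdef]
        rw [show s ^ 2 * (r ^ 2 * (1 + s ^ 2) / (s ^ 2 * (1 + r ^ 2))) /
            (1 + s ^ 2 - s ^ 2 * (r ^ 2 * (1 + s ^ 2) / (s ^ 2 * (1 + r ^ 2)))) = r ^ 2 by
          rw [div_eq_iff hDx.ne']; field_simp; ring]
        exact Real.sqrt_sq hr0.le
  -- injectivity
  have hinj : InjOn φ (Ioo 0 1) := by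
    intro x hx y hy hxy
    have hGx := hG x hx; have hGy := hG y hy
    have hDx := hD x hx.2; have hDy := hD y hy.2
    have h : s ^ 2 * x / (1 + s ^ 2 - s ^ 2 * x) = s ^ 2 * y / (1 + s ^ 2 - s ^ 2 * y) := by
      have := congrArg (· ^ 2) hxy
      simpa [hφdef, Real.sq_sqrt hGx.le, Real.sq_sqrt hGy.le] using this
    have h2 := (div_eq_div_iff hDx.ne' hDy.ne').mp h
    have h4 : (s ^ 2 + s ^ 2 * s ^ 2) * x = (s ^ 2 + s ^ 2 * s ^ 2) * y := by
      linear_combination h2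
    exact mul_left_cancel₀ (by positivity) h4
  -- derivative
  set φ' : ℝ → ℝ := fun x => 1 / (2 * Real.sqrt (s ^ 2 * x / (1 + s ^ 2 - s ^ 2 * x))) *
      (s ^ 2 * (1 + s ^ 2) / (1 + s ^ 2 - s ^ 2 * x) ^ 2) with hφ'def
  have hder : ∀ x ∈ Ioo (0:ℝ) 1, HasDerivWithinAt φ (φ' x) (Ioo 0 1) x := by
    intro x hx
    have hGx := hG x hx
    have hDx := hD x hx.2
    have hnum : HasDerivAt (fun y : ℝ => s ^ 2 * y) (s ^ 2) x := by
      simpa using (hasDerivAt_id x).const_mul (s ^ 2)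
    have hden : HasDerivAt (fun y : ℝ => 1 + s ^ 2 - s ^ 2 * y) (-(s ^ 2)) x := by
      simpa using ((hasDerivAt_id x).const_mul (s ^ 2)).const_sub (1 + s ^ 2)
    have h1 := hnum.div hden hDx.ne'
    have h2 : HasDerivAt Real.sqrt
        (1 / (2 * Real.sqrt (s ^ 2 * x / (1 + s ^ 2 - s ^ 2 * x))))
        (s ^ 2 * x / (1 + s ^ 2 - s ^ 2 * x)) := Real.hasDerivAt_sqrt hGx.ne'
    have h3 := (h2.comp x h1).hasDerivWithinAt (s := Ioo 0 1)
    have heq : 1 / (2 * Real.sqrt (s ^ 2 * x / (1 + s ^ 2 - s ^ 2 * x))) *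
        ((s ^ 2 * (1 + s ^ 2 - s ^ 2 * x) - s ^ 2 * x * -s ^ 2) /
          (1 + s ^ 2 - s ^ 2 * x) ^ 2) = φ' x := by
      simp only [hφ'def]
      congr 2
      ring
    exact heq ▸ h3
  rw [← himg, lintegral_image_deriv measurableSet_Ioo hder hinj]
  rw [setLIntegral_congr_fun_ae measurableSet_Ioo (ae_of_all _ (fun x hx => ?_))
    (g := fun x => ENNReal.ofReal ((s ^ 2) ^ ((j + l) / 2 - 1) * (1 + s ^ 2) ^ (-l / 2) / 2) *
      ENNReal.ofReal (x ^ (l / 2 - 1) * (1 - x) ^ (j / 2 - 1)))]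
  · rw [lintegral_const_mul' _ _ ENNReal.ofReal_ne_top,
      beta_lintegral (by linarith) (by linarith),
      ← ENNReal.ofReal_mul (by positivity),
      show l / 2 + j / 2 = (j + l) / 2 by ring]
    congr 1
    ring
  · -- pointwise
    beta_reduce
    have hx0 := hx.1
    have hx1 := hx.2
    have hGx := hG x hx
    have hDx := hD x hx.2
    have hsq : 0 < Real.sqrt (s ^ 2 * x / (1 + s ^ 2 - s ^ 2 * x)) := Real.sqrt_pos.mpr hGx
    have hφx : φ x = Real.sqrt (s ^ 2 * x / (1 + s ^ 2 - s ^ 2 * x)) := rfl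
    have hφsq : φ x ^ 2 = s ^ 2 * x / (1 + s ^ 2 - s ^ 2 * x) := Real.sq_sqrt hGx.le
    have h1 : s ^ 2 - φ x ^ 2 = s ^ 2 * (1 + s ^ 2) * (1 - x) / (1 + s ^ 2 - s ^ 2 * x) := by
      rw [hφsq]; field_simp; ring
    have h2 : 1 + φ x ^ 2 = (1 + s ^ 2) / (1 + s ^ 2 - s ^ 2 * x) := by
      rw [hφsq]; field_simp; ring
    have h3 : φ x ^ (l - 2)
        = (s ^ 2 * x / (1 + s ^ 2 - s ^ 2 * x)) ^ (l / 2 - 1) := by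
      rw [hφx, Real.sqrt_eq_rpow, ← Real.rpow_mul hGx.le,
        show 1 / 2 * (l - 2) = l / 2 - 1 by ring]
    have habs : |φ' x| = 1 / (2 * Real.sqrt (s ^ 2 * x / (1 + s ^ 2 - s ^ 2 * x))) *
        (s ^ 2 * (1 + s ^ 2) / (1 + s ^ 2 - s ^ 2 * x) ^ 2) := by
      simp only [hφ'def]
      rw [abs_of_nonneg (mul_nonneg (by positivity) (by positivity))]
    have hcE1 : (0:ℝ) ≤ s ^ 2 * (1 + s ^ 2) * (1 - x) / (1 + s ^ 2 - s ^ 2 * x) :=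
      div_nonneg (mul_nonneg (mul_nonneg hs2.le h1s.le) (by linarith)) hDx.le
    rw [habs, h1, h2, h3]
    have hc2 : 0 ≤ (s ^ 2 * (1 + s ^ 2) * (1 - x) / (1 + s ^ 2 - s ^ 2 * x)) ^ (j / 2 - 1) *
        φ x * ((s ^ 2 * x / (1 + s ^ 2 - s ^ 2 * x)) ^ (l / 2 - 1) *
          ((1 + s ^ 2) / (1 + s ^ 2 - s ^ 2 * x)) ^ (-(j + l) / 2)) :=
      mul_nonneg (mul_nonneg (Real.rpow_nonneg hcE1 _) (Real.sqrt_nonneg _))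
        (mul_nonneg (Real.rpow_nonneg hGx.le _)
          (Real.rpow_nonneg (div_nonneg h1s.le hDx.le) _))
    have hc1 : (0:ℝ) ≤ 1 / (2 * Real.sqrt (s ^ 2 * x / (1 + s ^ 2 - s ^ 2 * x))) *
        (s ^ 2 * (1 + s ^ 2) / (1 + s ^ 2 - s ^ 2 * x) ^ 2) :=
      mul_nonneg (by positivity) (div_nonneg (mul_nonneg hs2.le h1s.le) (sq_nonneg _))
    have hcst : (0:ℝ) ≤ (s ^ 2) ^ ((j + l) / 2 - 1) * (1 + s ^ 2) ^ (-l / 2) / 2 := by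
      positivity
    rw [mul_assoc ((s ^ 2 * (1 + s ^ 2) * (1 - x) / (1 + s ^ 2 - s ^ 2 * x)) ^ (j / 2 - 1)) (φ x)]
      at hc2
    rw [← ENNReal.ofReal_mul hc1, ← ENNReal.ofReal_mul hcst]
    congr 1
    rw [hφx]
    have hcancel : ∀ P Q1 Q2 b S : ℝ, S ≠ 0 →
        1 / (2 * S) * b * (P * S * (Q1 * Q2)) = P * (Q1 * (Q2 * b)) / 2 := by
      intro P Q1 Q2 b S hS; field_simp
    rw [hcancel _ _ _ _ _ (Real.sqrt_pos.mpr hGx).ne']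
    have halg := rpow_alg2 s x (j / 2 - 1) (l / 2 - 1) (-(j + l) / 2) hs hx0 hx1 (by ring)
    rw [show j / 2 - 1 + (l / 2 - 1) + 1 = (j + l) / 2 - 1 by ring,
      show j / 2 - 1 + -(j + l) / 2 + 1 = -l / 2 by ring] at halg
    rw [halg]
    ring

/-- The Erdélyi–Kober fractional integral of the first kind. -/
noncomputable def EKplus (β : ℝ) (g : ℝ → ℝ≥0∞) (t : ℝ) : ℝ≥0∞ :=
  ENNReal.ofReal (2 / Real.Gamma β) *
    ∫⁻ r in Ioo (0:ℝ) t, ENNReal.ofReal ((t ^ 2 - r ^ 2) ^ (β - 1) * r) * g r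

/-- The Erdélyi–Kober fractional integral of the second kind. -/
noncomputable def EKminus (β : ℝ) (g : ℝ → ℝ≥0∞) (t : ℝ) : ℝ≥0∞ :=
  ENNReal.ofReal (2 / Real.Gamma β) *
    ∫⁻ r in Ioi t, ENNReal.ofReal ((r ^ 2 - t ^ 2) ^ (β - 1) * r) * g r

/-- The mixed Radon transform of `f₀(t) = (1+t²)^{−n/2}`:
`(I_{j,k} f₀)(s) = c_k (1+s²)^{(j+k−n)/2}` with `c_k = π^{k/2} Γ((n−k)/2)/Γ(n/2)`. -/
theorem mixed_radon_poisson (n j k ℓ : ℕ) (hj : 1 ≤ j) (hk : 1 ≤ k)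
    (hℓ : 1 ≤ ℓ) (hn : n = j + k + ℓ) :
    ∀ s > (0:ℝ),
      ENNReal.ofReal
          ((Real.pi ^ ((k : ℝ) / 2) * Real.Gamma (((n : ℝ) - k) / 2) /
              Real.Gamma (((n : ℝ) - j - k) / 2)) / s ^ ((n : ℝ) - k - 2)) *
        EKplus ((j : ℝ) / 2)
          (fun r => ENNReal.ofReal (r ^ ((ℓ : ℝ) - 2)) *
            EKminus ((k : ℝ) / 2)
              (fun t => ENNReal.ofReal ((1 + t ^ 2) ^ (-(n : ℝ) / 2))) r) s
      = ENNReal.ofReal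
          ((Real.pi ^ ((k : ℝ) / 2) * Real.Gamma (((n : ℝ) - k) / 2) /
              Real.Gamma ((n : ℝ) / 2)) *
            (1 + s ^ 2) ^ (((j : ℝ) + k - n) / 2)) := by
  intro s hs
  have hJ : (0:ℝ) < (j:ℝ) := by exact_mod_cast hj
  have hK : (0:ℝ) < (k:ℝ) := by exact_mod_cast hk
  have hL : (0:ℝ) < (ℓ:ℝ) := by exact_mod_cast hℓ
  have hnℝ : (n:ℝ) = (j:ℝ) + (k:ℝ) + (ℓ:ℝ) := by rw [hn]; push_cast; ring
  have hGJ := Real.Gamma_pos_of_pos (by linarith : (0:ℝ) < (j:ℝ)/2)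
  have hGK := Real.Gamma_pos_of_pos (by linarith : (0:ℝ) < (k:ℝ)/2)
  have hGL := Real.Gamma_pos_of_pos (by linarith : (0:ℝ) < (ℓ:ℝ)/2)
  have hGJL := Real.Gamma_pos_of_pos (by linarith : (0:ℝ) < ((j:ℝ)+(ℓ:ℝ))/2)
  have hGN := Real.Gamma_pos_of_pos (by linarith : (0:ℝ) < ((j:ℝ)+(k:ℝ)+(ℓ:ℝ))/2)
  -- inner evaluation
  have hEK : ∀ r ∈ Ioo (0:ℝ) s,
      ENNReal.ofReal ((s ^ 2 - r ^ 2) ^ ((j:ℝ)/2 - 1) * r) *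
        (ENNReal.ofReal (r ^ ((ℓ:ℝ) - 2)) *
          EKminus ((k:ℝ)/2) (fun t => ENNReal.ofReal ((1 + t ^ 2) ^ (-(n:ℝ) / 2))) r)
      = ENNReal.ofReal (Real.Gamma (((j:ℝ)+(ℓ:ℝ))/2) / Real.Gamma (((j:ℝ)+(k:ℝ)+(ℓ:ℝ))/2)) *
        ENNReal.ofReal ((s ^ 2 - r ^ 2) ^ ((j:ℝ)/2 - 1) * r *
          (r ^ ((ℓ:ℝ) - 2) * (1 + r ^ 2) ^ (-((j:ℝ)+(ℓ:ℝ)) / 2))) := by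
    intro r hr
    rw [EKminus]
    simp only [show -(n:ℝ)/2 = -((k:ℝ) + ((j:ℝ)+(ℓ:ℝ)))/2 by rw [hnℝ]; ring]
    rw [inner_eval (k:ℝ) ((j:ℝ)+(ℓ:ℝ)) hK (by linarith) hr.1]
    rw [show ((k:ℝ) + ((j:ℝ)+(ℓ:ℝ)))/2 = ((j:ℝ)+(k:ℝ)+(ℓ:ℝ))/2 by ring]
    have ha : (0:ℝ) ≤ (s ^ 2 - r ^ 2) ^ ((j:ℝ)/2 - 1) * r :=
      mul_nonneg (Real.rpow_nonneg (by nlinarith [hr.1, hr.2] : (0:ℝ) ≤ s ^ 2 - r ^ 2) _)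
        hr.1.le
    have hb : (0:ℝ) ≤ r ^ ((ℓ:ℝ) - 2) := Real.rpow_nonneg hr.1.le _
    have hc : (0:ℝ) ≤ 2 / Real.Gamma ((k:ℝ)/2) := by positivity
    rw [← ENNReal.ofReal_mul hc, ← ENNReal.ofReal_mul hb, ← ENNReal.ofReal_mul ha,
      ← ENNReal.ofReal_mul (by positivity)]
    congr 1
    field_simp
  rw [EKplus, setLIntegral_congr_fun_ae measurableSet_Ioo (ae_of_all _ hEK),
    lintegral_const_mul' _ _ ENNReal.ofReal_ne_top,
    outer_eval (j:ℝ) (ℓ:ℝ) hJ hL hs]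
  -- final constant arithmetic
  have hsp : (0:ℝ) < s ^ ((n:ℝ) - (k:ℝ) - 2) := Real.rpow_pos_of_pos hs _
  have hs2 : (0:ℝ) < (s:ℝ) ^ 2 := by positivity
  have hspow : ((s:ℝ) ^ 2) ^ (((j:ℝ)+(ℓ:ℝ))/2 - 1) = s ^ ((n:ℝ) - (k:ℝ) - 2) := by
    rw [← Real.rpow_natCast s 2, ← Real.rpow_mul hs.le]
    congr 1
    rw [hnℝ]; push_cast; ring
  rw [hspow, show (((j:ℝ) + (k:ℝ) - (n:ℝ))/2) = -(ℓ:ℝ)/2 by rw [hnℝ]; ring,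
    show (((n:ℝ) - (k:ℝ))/2) = ((j:ℝ)+(ℓ:ℝ))/2 by rw [hnℝ]; ring,
    show (((n:ℝ) - (j:ℝ) - (k:ℝ))/2) = (ℓ:ℝ)/2 by rw [hnℝ]; ring,
    show ((n:ℝ)/2) = ((j:ℝ)+(k:ℝ)+(ℓ:ℝ))/2 by rw [hnℝ]]
  rw [← ENNReal.ofReal_mul (div_nonneg hGJL.le hGN.le),
    ← ENNReal.ofReal_mul (by positivity : (0:ℝ) ≤ 2 / Real.Gamma ((j:ℝ)/2)),
    ← ENNReal.ofReal_mul (div_nonneg (div_nonneg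
      (mul_nonneg (by positivity) hGJL.le) hGL.le) hsp.le)]
  congr 1
  field_simp
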